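/- Let h, h_star, g be vectors in R^d, let U be a random vector with E[U] = g - h and E[||U - (g - h)||^2] <= chi * ||g - h||^2 for some chi >= 0, and set h_plus = h + lambda * U with lambda = 1/(1 + chi). Then E[ ||h_plus - h_star||^2 ] <= (chi/(1 + chi)) * ||h - h_star||^2 + (1/(1 + chi)) * ||g - h_star||^2. -/

import Mathlib

open MeasureTheory

theorem stmt10 {d : ℕ} {Ω : Type*} [MeasurableSpace Ω] (μ : Measure Ω)
    [IsProbabilityMeasure μ]
    (h hstar g : EuclideanSpace ℝ (Fin d))
    (U : Ω → EuclideanSpace ℝ (Fin d)) (χ lam : ℝ) (hχ : 0 ≤ χ)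
    (hlam : lam = 1 / (1 + χ))
    (hUint : Integrable U μ)
    (hmean : ∫ a, U a ∂μ = g - h)
    (hUsq : Integrable (fun a => ‖U a - (g - h)‖ ^ 2) μ)
    (hvar : ∫ a, ‖U a - (g - h)‖ ^ 2 ∂μ ≤ χ * ‖g - h‖ ^ 2)
    (hplussq : Integrable (fun a => ‖h + lam • U a - hstar‖ ^ 2) μ) :
    ∫ a, ‖h + lam • U a - hstar‖ ^ 2 ∂μ ≤
      (χ / (1 + χ)) * ‖h - hstar‖ ^ 2 + (1 / (1 + χ)) * ‖g - hstar‖ ^ 2 := by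
  have hpos : (0:ℝ) < 1 + χ := by linarith
  set w : EuclideanSpace ℝ (Fin d) := g - h with hw
  set A : EuclideanSpace ℝ (Fin d) := h - hstar with hA
  set c : EuclideanSpace ℝ (Fin d) := A + lam • w with hc
  set V : Ω → EuclideanSpace ℝ (Fin d) := fun a => U a - w with hVdef
  have hVint : Integrable V μ := hUint.sub (integrable_const _)
  have hVmean : ∫ a, V a ∂μ = 0 := by
    rw [hVdef]
    rw [integral_sub hUint (integrable_const _), hmean, integral_const]
    simp [hw]
  have key : ∀ a, ‖h + lam • U a - hstar‖ ^ 2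
      = ‖c‖ ^ 2 + 2 * lam * inner ℝ c (V a) + lam ^ 2 * ‖V a‖ ^ 2 := by
    intro a
    have h1 : h + lam • U a - hstar = c + lam • V a := by
      rw [hc, hA, hVdef, hw]; module
    rw [h1, @norm_add_sq_real]
    rw [real_inner_smul_right, norm_smul]
    ring_nf
    simp [abs_mul_abs_self, sq]
  have hint2 : Integrable (fun a => 2 * lam * inner ℝ c (V a) : Ω → ℝ) μ := by
    apply Integrable.const_mul
    exact hVint.const_inner c
  have hint3 : Integrable (fun a => lam ^ 2 * ‖V a‖ ^ 2) μ := hUsq.const_mul _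
  have hInt : ∫ a, ‖h + lam • U a - hstar‖ ^ 2 ∂μ
      = ‖c‖ ^ 2 + lam ^ 2 * ∫ a, ‖V a‖ ^ 2 ∂μ := by
    calc ∫ a, ‖h + lam • U a - hstar‖ ^ 2 ∂μ
        = ∫ a, (‖c‖ ^ 2 + 2 * lam * inner ℝ c (V a) + lam ^ 2 * ‖V a‖ ^ 2) ∂μ := by
          exact integral_congr_ae (Filter.Eventually.of_forall key)
      _ = ∫ a, (‖c‖ ^ 2 + 2 * lam * inner ℝ c (V a)) ∂μ
            + ∫ a, lam ^ 2 * ‖V a‖ ^ 2 ∂μ := by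
          exact integral_add ((integrable_const _).add hint2) hint3
      _ = (∫ a, (‖c‖ ^ 2 : ℝ) ∂μ) + (∫ a, 2 * lam * inner ℝ c (V a) ∂μ)
            + ∫ a, lam ^ 2 * ‖V a‖ ^ 2 ∂μ := by
          rw [integral_add (integrable_const _) hint2]
      _ = ‖c‖ ^ 2 + lam ^ 2 * ∫ a, ‖V a‖ ^ 2 ∂μ := by
          rw [integral_const, integral_const_mul, integral_const_mul, integral_inner hVint,
            hVmean]
          simp
  rw [hInt]
  have hvar' : lam ^ 2 * ∫ a, ‖V a‖ ^ 2 ∂μ ≤ lam ^ 2 * (χ * ‖w‖ ^ 2) := by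
    apply mul_le_mul_of_nonneg_left _ (sq_nonneg _)
    exact hvar
  have halg : ‖c‖ ^ 2 + lam ^ 2 * (χ * ‖w‖ ^ 2)
      = (χ / (1 + χ)) * ‖h - hstar‖ ^ 2 + (1 / (1 + χ)) * ‖g - hstar‖ ^ 2 := by
    have hc2 : ‖c‖ ^ 2 = ‖A‖ ^ 2 + 2 * lam * inner ℝ A w + lam ^ 2 * ‖w‖ ^ 2 := by
      rw [hc, @norm_add_sq_real, real_inner_smul_right, norm_smul]
      ring_nf
      simp [abs_mul_abs_self, sq]
    have hg : (g - hstar : EuclideanSpace ℝ (Fin d)) = A + w := by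
      rw [hA, hw]; module
    have hg2 : ‖g - hstar‖ ^ 2 = ‖A‖ ^ 2 + 2 * inner ℝ A w + ‖w‖ ^ 2 := by
      rw [hg, @norm_add_sq_real]
    rw [hc2, hg2, hA, hlam]
    field_simp
    ring
  linarith
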